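/- Let k be a perfect field of characteristic p > 0. The set of k-algebra automorphisms σ of k[[t]] such that σ(t) is algebraic over the subfield k(t) of k((t)) forms a subgroup of Aut(k[[t]]). -/

import Mathlib

open scoped RatFunc

open Polynomial
open scoped Polynomial.Bivariate

namespace AlgAutSubgroupAux

variable {k : Type*} [Field k]

/-- The element `t = X` inside the Laurent series field. -/
noncomputable def tt (k : Type*) [Field k] : LaurentSeries k :=
  ((PowerSeries.X : PowerSeries k) : LaurentSeries k)

lemma algebraMap_poly_eq (k : Type*) [Field k] :
    algebraMap k[X] (LaurentSeries k)
      = eval₂RingHom (algebraMap k (LaurentSeries k)) (tt k) := by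
  apply Polynomial.ringHom_ext
  · intro a
    rw [coe_eval₂RingHom, eval₂_C, Polynomial.algebraMap_hahnSeries_apply,
      Polynomial.coe_C, HahnSeries.algebraMap_apply' (Γ := ℤ) (R := k)]
    simp [PowerSeries.algebraMap_apply]
  · rw [coe_eval₂RingHom, eval₂_X, Polynomial.algebraMap_hahnSeries_apply,
      Polynomial.coe_X]
    rfl

lemma aeval_tt (f : k[X]) :
    Polynomial.aeval (tt k) f = algebraMap k[X] (LaurentSeries k) f := by
  rw [algebraMap_poly_eq, aeval_def, coe_eval₂RingHom]

lemma transcendental_tt (k : Type*) [Field k] : Transcendental k (tt k) := by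
  rintro ⟨f, hf0, hf⟩
  rw [aeval_tt] at hf
  exact hf0 (Polynomial.algebraMap_hahnSeries_injective (Γ := ℤ) (R := k)
    (by rw [hf, map_zero]))

/-- Algebraic dependence of two Laurent series over `k`. -/
def AlgDep (k : Type*) [Field k] (x y : LaurentSeries k) : Prop :=
  ∃ P : k[X][Y], P ≠ 0 ∧
    (P.map (mapRingHom (algebraMap k (LaurentSeries k)))).evalEval x y = 0

/-- The swap of the two variables of a bivariate polynomial, as a ring hom. -/
noncomputable def swapHom (R : Type*) [CommSemiring R] : R[X][Y] →+* R[X][Y] :=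
  eval₂RingHom (eval₂RingHom (C.comp C) Y) (C X)

lemma swapHom_swapHom (R : Type*) [CommSemiring R] (P : R[X][Y]) :
    swapHom R (swapHom R P) = P := by
  have h : (swapHom R).comp (swapHom R) = RingHom.id _ := by
    ext <;> simp [swapHom]
  calc swapHom R (swapHom R P) = ((swapHom R).comp (swapHom R)) P := rfl
    _ = P := by rw [h, RingHom.id_apply]

lemma swapHom_ne_zero {R : Type*} [CommSemiring R] {P : R[X][Y]} (h : P ≠ 0) :
    swapHom R P ≠ 0 := fun h0 => h (by rw [← swapHom_swapHom R P, h0, map_zero])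

lemma evalEval_swapHom {A : Type*} [CommRing A] (x y : A) (P : A[X][Y]) :
    (swapHom A P).evalEval x y = P.evalEval y x := by
  have h : (evalEvalRingHom x y).comp (swapHom A) = evalEvalRingHom y x := by
    ext <;> simp [swapHom]
  calc (swapHom A P).evalEval x y = ((evalEvalRingHom x y).comp (swapHom A)) P := rfl
    _ = P.evalEval y x := by rw [h]; rfl

lemma map_swapHom {R S : Type*} [CommSemiring R] [CommSemiring S] (g : R →+* S)
    (P : R[X][Y]) :
    (swapHom R P).map (mapRingHom g) = swapHom S (P.map (mapRingHom g)) := by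
  have h : (mapRingHom (mapRingHom g)).comp (swapHom R)
      = (swapHom S).comp (mapRingHom (mapRingHom g)) := by
    ext <;> simp [swapHom]
  calc (swapHom R P).map (mapRingHom g)
      = ((mapRingHom (mapRingHom g)).comp (swapHom R)) P := rfl
    _ = ((swapHom S).comp (mapRingHom (mapRingHom g))) P := by rw [h]
    _ = swapHom S (P.map (mapRingHom g)) := rfl

lemma AlgDep.symm {x y : LaurentSeries k} (h : AlgDep k x y) : AlgDep k y x := by
  obtain ⟨P, hP0, hP⟩ := h
  refine ⟨swapHom k P, swapHom_ne_zero hP0, ?_⟩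
  rw [map_swapHom, evalEval_swapHom]
  exact hP

lemma AlgDep.map {x y : LaurentSeries k} (φ : LaurentSeries k ≃+* LaurentSeries k)
    (hφ : ∀ a : k, φ (algebraMap k (LaurentSeries k) a) = algebraMap k (LaurentSeries k) a)
    (h : AlgDep k x y) : AlgDep k (φ x) (φ y) := by
  obtain ⟨P, hP0, hP⟩ := h
  refine ⟨P, hP0, ?_⟩
  have hcomp : (φ : LaurentSeries k →+* LaurentSeries k).comp
      (algebraMap k (LaurentSeries k)) = algebraMap k (LaurentSeries k) := RingHom.ext hφ
  have key := map_mapRingHom_evalEval (φ : LaurentSeries k →+* LaurentSeries k)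
      (P.map (mapRingHom (algebraMap k (LaurentSeries k)))) x y
  rw [hP, map_zero, Polynomial.map_map, Polynomial.mapRingHom_comp, hcomp] at key
  exact key

lemma isAlgebraic_iff_algDep (y : LaurentSeries k) :
    IsAlgebraic (RatFunc k) y ↔ AlgDep k (tt k) y := by
  rw [← IsFractionRing.isAlgebraic_iff k[X] (RatFunc k) (LaurentSeries k)]
  constructor
  · rintro ⟨P, hP0, hP⟩
    refine ⟨P, hP0, ?_⟩
    rw [← eval₂_eval₂RingHom_apply, ← coe_eval₂RingHom, ← algebraMap_poly_eq,
      coe_eval₂RingHom, ← aeval_def]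
    exact hP
  · rintro ⟨P, hP0, hP⟩
    refine ⟨P, hP0, ?_⟩
    rw [aeval_def, ← coe_eval₂RingHom (algebraMap k[X] (LaurentSeries k)) y,
      algebraMap_poly_eq, coe_eval₂RingHom, eval₂_eval₂RingHom_apply]
    exact hP

lemma isAlgebraic_trans_of_algDep {x z : LaurentSeries k}
    (hxT : Transcendental k x) (hxA : IsAlgebraic (RatFunc k) x)
    (h : AlgDep k x z) : IsAlgebraic (RatFunc k) z := by
  obtain ⟨P, hP0, hP⟩ := h
  set s : Set (LaurentSeries k) :=
    Set.range (algebraMap (RatFunc k) (LaurentSeries k)) ∪ {x} with hs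
  set E : IntermediateField k (LaurentSeries k) := IntermediateField.adjoin k s with hEdef
  have hrange : ∀ r : RatFunc k, algebraMap (RatFunc k) (LaurentSeries k) r ∈ E :=
    fun r => IntermediateField.subset_adjoin k s (Or.inl ⟨r, rfl⟩)
  have hxE : x ∈ E := IntermediateField.subset_adjoin k s (Or.inr rfl)
  letI : Algebra (RatFunc k) E :=
    RingHom.toAlgebra ((algebraMap (RatFunc k) (LaurentSeries k)).codRestrict
      E.toSubfield hrange)
  haveI : IsScalarTower (RatFunc k) E (LaurentSeries k) := by
    refine ⟨fun r e l => ?_⟩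
    show ((r • e : E) : LaurentSeries k) * l = r • (((e : E) : LaurentSeries k) * l)
    have h1 : ((r • e : E) : LaurentSeries k)
        = algebraMap (RatFunc k) (LaurentSeries k) r * (e : LaurentSeries k) := by
      rw [Algebra.smul_def]; rfl
    rw [h1, mul_assoc, Algebra.smul_def]
  have hCmem : ∀ a : k, algebraMap k (LaurentSeries k) a
      = algebraMap (RatFunc k) (LaurentSeries k) (algebraMap k[X] (RatFunc k) (C a)) := by
    intro a
    rw [← IsScalarTower.algebraMap_apply k[X] (RatFunc k) (LaurentSeries k),
      algebraMap_poly_eq, coe_eval₂RingHom, eval₂_C]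
  have hmem : ∀ f : k[X], eval₂ (algebraMap k (LaurentSeries k)) x f ∈ E := by
    intro f
    induction f using Polynomial.induction_on' with
    | add p q hp hq => rw [eval₂_add]; exact add_mem hp hq
    | monomial n a =>
      rw [eval₂_monomial]
      refine mul_mem ?_ (pow_mem hxE n)
      rw [hCmem a]
      exact hrange _
  set B : k[X] →+* E :=
    RingHom.codRestrict (eval₂RingHom (algebraMap k (LaurentSeries k)) x) E.toSubfield
      (fun f => hmem f) with hB
  have hBinj : Function.Injective B := by
    rw [injective_iff_map_eq_zero]
    intro f hf
    by_contra hf0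
    refine hxT ⟨f, hf0, ?_⟩
    have h2 : eval₂ (algebraMap k (LaurentSeries k)) x f = 0 := congrArg Subtype.val hf
    rw [aeval_def]
    exact h2
  have hzE : IsAlgebraic E z := by
    refine ⟨P.map B, by rwa [Polynomial.map_ne_zero_iff hBinj], ?_⟩
    rw [aeval_def, eval₂_map]
    have hcomp : (algebraMap E (LaurentSeries k)).comp B
        = eval₂RingHom (algebraMap k (LaurentSeries k)) x := rfl
    rw [hcomp, eval₂_eval₂RingHom_apply]
    exact hP
  have hint : ∀ u (hu : u ∈ E), IsIntegral (RatFunc k) u := by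
    intro u hu
    induction hu using IntermediateField.adjoin_induction with
    | mem v hv =>
      rcases hv with ⟨r, rfl⟩ | rfl
      · exact isIntegral_algebraMap
      · exact hxA.isIntegral
    | algebraMap a =>
      rw [hCmem a]
      exact isIntegral_algebraMap
    | add a b _ _ ha hb => exact ha.add hb
    | inv a _ ha => exact ha.inv
    | mul a b _ _ ha hb => exact ha.mul hb
  haveI hEint : Algebra.IsIntegral (RatFunc k) E := by
    constructor
    intro e
    let ι : E →ₐ[RatFunc k] (LaurentSeries k) :=
      { toRingHom := algebraMap E (LaurentSeries k), commutes' := fun r => rfl }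
    have hιinj : Function.Injective ι := (algebraMap E (LaurentSeries k)).injective
    exact (isIntegral_algHom_iff ι hιinj).mp (hint e.1 e.2)
  rw [isAlgebraic_iff_isIntegral] at hzE ⊢
  exact isIntegral_trans (R := RatFunc k) (A := ↥E) z hzE

/-- The lift of an automorphism of the power series ring to the Laurent series field. -/
noncomputable def lift (σ : PowerSeries k ≃ₐ[k] PowerSeries k) :
    LaurentSeries k ≃+* LaurentSeries k :=
  IsLocalization.ringEquivOfRingEquiv (M := nonZeroDivisors (PowerSeries k))
    (T := nonZeroDivisors (PowerSeries k)) (LaurentSeries k) (LaurentSeries k)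
    σ.toRingEquiv (MulEquivClass.map_nonZeroDivisors σ.toRingEquiv)

lemma lift_coe (σ : PowerSeries k ≃ₐ[k] PowerSeries k) (f : PowerSeries k) :
    lift σ (f : LaurentSeries k) = ((σ f : PowerSeries k) : LaurentSeries k) := by
  have h1 : (f : LaurentSeries k) = algebraMap (PowerSeries k) (LaurentSeries k) f := rfl
  have h2 : ((σ f : PowerSeries k) : LaurentSeries k)
      = algebraMap (PowerSeries k) (LaurentSeries k) (σ f) := rfl
  rw [h1, h2, lift]
  exact IsLocalization.ringEquivOfRingEquiv_eq _ f

lemma lift_fix (σ : PowerSeries k ≃ₐ[k] PowerSeries k) (a : k) :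
    lift σ (algebraMap k (LaurentSeries k) a) = algebraMap k (LaurentSeries k) a := by
  have h1 : algebraMap k (LaurentSeries k) a
      = ((algebraMap k (PowerSeries k) a : PowerSeries k) : LaurentSeries k) := rfl
  rw [h1, lift_coe, AlgEquiv.commutes]

lemma lift_tt (σ : PowerSeries k ≃ₐ[k] PowerSeries k) :
    lift σ (tt k) = ((σ PowerSeries.X : PowerSeries k) : LaurentSeries k) :=
  lift_coe σ PowerSeries.X

lemma transcendental_lift_tt (σ : PowerSeries k ≃ₐ[k] PowerSeries k) :
    Transcendental k (((σ PowerSeries.X : PowerSeries k) : LaurentSeries k)) := by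
  rintro ⟨f, hf0, hf⟩
  refine transcendental_tt k ⟨f, hf0, ?_⟩
  have key : ((lift σ : LaurentSeries k →+* LaurentSeries k)) (Polynomial.aeval (tt k) f)
      = Polynomial.aeval (((σ PowerSeries.X : PowerSeries k) : LaurentSeries k)) f := by
    rw [aeval_def, aeval_def, Polynomial.hom_eval₂]
    congr 1
    · exact RingHom.ext (lift_fix σ)
    · exact lift_tt σ
  have h3 := key.trans hf
  have h0 : (lift σ : LaurentSeries k →+* LaurentSeries k) (Polynomial.aeval (tt k) f)
      = (lift σ : LaurentSeries k →+* LaurentSeries k) 0 := by rw [h3, map_zero]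
  exact (lift σ).injective h0

end AlgAutSubgroupAux

open AlgAutSubgroupAux

/-- Let `k` be a perfect field of characteristic `p > 0`.  The set of
`k`-algebra automorphisms `σ` of `k[[t]]` such that `σ(t)` is algebraic over the
subfield `k(t)` of `k((t))` forms a subgroup of `Aut(k[[t]])`.  Here `k(t)` is the
field of rational functions `RatFunc k`, embedded in the Laurent series field
`k((t)) = LaurentSeries k`, and `σ(t) ∈ k[[t]] ⊆ k((t))`. -/
theorem algebraic_automorphisms_form_subgroup
    (k : Type*) [Field k] (p : ℕ) [Fact p.Prime] [CharP k p] [PerfectField k] :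
    ∃ S : Subgroup (PowerSeries k ≃ₐ[k] PowerSeries k),
      ∀ σ : PowerSeries k ≃ₐ[k] PowerSeries k,
        σ ∈ S ↔ IsAlgebraic (RatFunc k)
          ((σ PowerSeries.X : PowerSeries k) : LaurentSeries k) := by
  have htt_alg : IsAlgebraic (RatFunc k) (tt k) := by
    have h1 : tt k = algebraMap (RatFunc k) (LaurentSeries k) RatFunc.X := by
      rw [show algebraMap (RatFunc k) (LaurentSeries k) RatFunc.X
            = ((RatFunc.X : RatFunc k) : LaurentSeries k) from rfl,
        RatFunc.coe_X]
      show HahnSeries.ofPowerSeries ℤ k PowerSeries.X = _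
      rw [HahnSeries.ofPowerSeries_X]
    rw [h1]
    exact isAlgebraic_algebraMap RatFunc.X
  refine ⟨{
    carrier := {σ | IsAlgebraic (RatFunc k)
      ((σ PowerSeries.X : PowerSeries k) : LaurentSeries k)}
    one_mem' := by
      show IsAlgebraic (RatFunc k) (((1 : PowerSeries k ≃ₐ[k] PowerSeries k)
        PowerSeries.X : PowerSeries k) : LaurentSeries k)
      have h1 : ((1 : PowerSeries k ≃ₐ[k] PowerSeries k) PowerSeries.X : PowerSeries k)
          = PowerSeries.X := rfl
      rw [h1]
      exact htt_alg
    mul_mem' := by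
      intro σ τ hσ hτ
      simp only [Set.mem_setOf_eq] at hσ hτ ⊢
      have htτ : AlgDep k (tt k) ((τ PowerSeries.X : PowerSeries k) : LaurentSeries k) :=
        (isAlgebraic_iff_algDep _).mp hτ
      have happ := htτ.map (lift σ) (lift_fix σ)
      rw [lift_tt σ, lift_coe σ] at happ
      have hmul : ((σ * τ) PowerSeries.X : PowerSeries k) = σ (τ PowerSeries.X) := rfl
      rw [hmul]
      exact isAlgebraic_trans_of_algDep (transcendental_lift_tt σ) hσ happ
    inv_mem' := by
      intro σ hσ
      simp only [Set.mem_setOf_eq] at hσ ⊢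
      have h1 : AlgDep k (tt k) ((σ PowerSeries.X : PowerSeries k) : LaurentSeries k) :=
        (isAlgebraic_iff_algDep _).mp hσ
      have h2 := h1.symm.map (lift σ⁻¹) (lift_fix σ⁻¹)
      rw [lift_coe σ⁻¹, lift_tt σ⁻¹] at h2
      have h3 : (σ⁻¹ (σ PowerSeries.X) : PowerSeries k) = PowerSeries.X := by
        show σ.symm (σ PowerSeries.X) = PowerSeries.X
        exact σ.symm_apply_apply _
      rw [h3] at h2
      exact (isAlgebraic_iff_algDep _).mpr h2
  }, fun σ => Iff.rfl⟩
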